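/- The number of domino tilings of the 2-by-2 square is 2, the number of domino tilings of the 4-by-4 square is 36, the number of domino tilings of the 6-by-6 square is 6728, and the number of domino tilings of the 8-by-8 square is 12988816. -/

import Mathlib

/-- Two cells of the `m×m` square grid are adjacent if they differ by one step
horizontally or vertically. -/
def gridAdj {m : ℕ} (a b : Fin m × Fin m) : Prop :=
  (a.1 = b.1 ∧ ((a.2 : ℕ) + 1 = b.2 ∨ (b.2 : ℕ) + 1 = a.2)) ∨
  (a.2 = b.2 ∧ ((a.1 : ℕ) + 1 = b.1 ∨ (b.1 : ℕ) + 1 = a.1))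

instance {m : ℕ} (a b : Fin m × Fin m) : Decidable (gridAdj a b) := by
  unfold gridAdj; infer_instance

/-- The number of domino tilings of the `m×m` square, encoded as the number of
perfect matchings of the grid graph on its cells: fixed-point-free involutions `f`
of the set of cells with `v` and `f v` always adjacent. -/
def squareTilingCount (m : ℕ) : ℕ :=
  (Finset.univ.filter fun f : (Fin m × Fin m) → (Fin m × Fin m) =>
    ∀ v, f (f v) = v ∧ f v ≠ v ∧ gridAdj v (f v)).card

open Finset

lemma gridAdj_symm {m : ℕ} {a b : Fin m × Fin m} (h : gridAdj a b) : gridAdj b a := by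
  unfold gridAdj at *; tauto

/-- Index of a cell in row-major order. -/
def idx {m : ℕ} (v : Fin m × Fin m) : ℕ := (v.2 : ℕ) + (v.1 : ℕ) * m

lemma idx_lt {m : ℕ} (v : Fin m × Fin m) : idx v < m * m := by
  have h1 := v.1.isLt; have h2 := v.2.isLt
  unfold idx; nlinarith

lemma idx_inj {m : ℕ} {v w : Fin m × Fin m} (h : idx v = idx w) : v = w := by
  have hm : 0 < m := v.2.pos
  have h1 : (v.1 : ℕ) = idx v / m := by
    unfold idx; rw [Nat.add_mul_div_right _ _ hm, Nat.div_eq_of_lt v.2.isLt, Nat.zero_add]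
  have h2 : (v.2 : ℕ) = idx v % m := by
    unfold idx; rw [Nat.add_mul_mod_self_right, Nat.mod_eq_of_lt v.2.isLt]
  have h3 : (w.1 : ℕ) = idx w / m := by
    unfold idx; rw [Nat.add_mul_div_right _ _ hm, Nat.div_eq_of_lt w.2.isLt, Nat.zero_add]
  have h4 : (w.2 : ℕ) = idx w % m := by
    unfold idx; rw [Nat.add_mul_mod_self_right, Nat.mod_eq_of_lt w.2.isLt]
  rw [h] at h1 h2
  ext <;> omega

/-- A matching of the set `t` of cells (identity outside `t`). -/
def IsM {m : ℕ} (t : Finset (Fin m × Fin m)) (f : (Fin m × Fin m) → (Fin m × Fin m)) : Prop :=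
  ∀ u, (u ∈ t → f (f u) = u ∧ f u ≠ u ∧ gridAdj u (f u) ∧ f u ∈ t) ∧ (u ∉ t → f u = u)

instance {m : ℕ} (t : Finset (Fin m × Fin m)) (f : (Fin m × Fin m) → (Fin m × Fin m)) :
    Decidable (IsM t f) := by unfold IsM; infer_instance

/-- The number of matchings of `t`. -/
def matchN {m : ℕ} (t : Finset (Fin m × Fin m)) : ℕ := (univ.filter (IsM t)).card

lemma matchN_empty {m : ℕ} : matchN (m := m) ∅ = 1 := by
  rw [matchN, show (univ.filter (IsM (m := m) ∅)) = {id} from ?_, card_singleton]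
  ext f
  simp only [mem_filter, mem_univ, true_and, mem_singleton, IsM, notMem_empty]
  constructor
  · intro h; funext u; simpa using (h u).2 (by simp)
  · rintro rfl u; simp

lemma matchN_split {m : ℕ} (t : Finset (Fin m × Fin m)) (v : Fin m × Fin m) (hv : v ∈ t) :
    matchN t = ∑ w ∈ (t.erase v).filter (fun w => gridAdj v w),
      matchN ((t.erase v).erase w) := by
  rw [matchN]
  have hmap : ∀ f ∈ univ.filter (IsM (m := m) t), f v ∈ (t.erase v).filter (fun w => gridAdj v w) := by
    intro f hf
    simp only [mem_filter, mem_univ, true_and] at hf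
    obtain ⟨h1, h2, h3, h4⟩ := (hf v).1 hv
    exact mem_filter.mpr ⟨mem_erase.mpr ⟨h2, h4⟩, h3⟩
  rw [Finset.card_eq_sum_card_fiberwise hmap]
  apply Finset.sum_congr rfl
  intro w hw
  rw [mem_filter, mem_erase] at hw
  obtain ⟨⟨hwv, hwt⟩, hadj⟩ := hw
  rw [matchN]
  apply Finset.card_bij'
    (i := fun f _ => fun u => if u = v ∨ u = w then u else f u)
    (j := fun g _ => fun u => if u = v then w else if u = w then v else g u)
  · -- i maps into matchings of t''
    intro f hf
    simp only [mem_filter, mem_univ, true_and] at hf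
    obtain ⟨hf, hfv⟩ := hf
    have hfw : f w = v := by rw [← hfv]; exact ((hf v).1 hv).1
    simp only [mem_filter, mem_univ, true_and, IsM]
    intro u
    refine ⟨fun hu => ?_, fun hu => ?_⟩
    · rw [mem_erase, mem_erase] at hu
      obtain ⟨huw, huv, hut⟩ := hu
      obtain ⟨e1, e2, e3, e4⟩ := (hf u).1 hut
      have n1 : f u ≠ v := fun h => huw (by rw [← hfv, ← h]; exact e1.symm)
      have n2 : f u ≠ w := fun h => huv (by rw [← hfw, ← h]; exact e1.symm)
      have k1 : (if u = v ∨ u = w then u else f u) = f u := by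
        simp [huv, huw]
      rw [k1]
      have k2 : (if f u = v ∨ f u = w then f u else f (f u)) = u := by
        simp [n1, n2, e1]
      rw [k2]
      exact ⟨rfl, e2, e3, mem_erase.mpr ⟨n2, mem_erase.mpr ⟨n1, e4⟩⟩⟩
    · by_cases h1 : u = v ∨ u = w
      · rw [if_pos h1]
      · push_neg at h1
        rw [mem_erase, mem_erase] at hu
        push_neg at hu
        rw [if_neg (not_or.mpr h1)]
        exact (hf u).2 (hu h1.2 h1.1)
  · -- j maps into fiber
    intro g hg
    simp only [mem_filter, mem_univ, true_and, IsM] at hg ⊢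
    have hgv : g v = v := (hg v).2 (by simp [mem_erase])
    have hgw : g w = w := (hg w).2 (by simp [mem_erase])
    refine ⟨?_, by simp⟩
    intro u
    refine ⟨fun hu => ?_, fun hu => ?_⟩
    · by_cases h1 : u = v
      · rw [h1]
        rw [if_pos rfl, if_neg hwv, if_pos rfl]
        exact ⟨rfl, hwv, hadj, hwt⟩
      · by_cases h2 : u = w
        · rw [h2]
          rw [if_neg hwv, if_pos (rfl : w = w), if_pos (rfl : v = v)]
          exact ⟨rfl, Ne.symm hwv, gridAdj_symm hadj, hv⟩
        · have hut' : u ∈ (t.erase v).erase w := mem_erase.mpr ⟨h2, mem_erase.mpr ⟨h1, hu⟩⟩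
          obtain ⟨e1, e2, e3, e4⟩ := (hg u).1 hut'
          rw [mem_erase, mem_erase] at e4
          rw [if_neg h1, if_neg h2, if_neg e4.2.1, if_neg e4.1]
          exact ⟨e1, e2, e3, e4.2.2⟩
    · have h1 : u ≠ v := fun h => hu (h ▸ hv)
      have h2 : u ≠ w := fun h => hu (h ▸ hwt)
      have hut' : u ∉ (t.erase v).erase w := fun h => hu (mem_of_mem_erase (mem_of_mem_erase h))
      rw [if_neg h1, if_neg h2]
      exact (hg u).2 hut'
  · -- left inverse
    intro f hf
    simp only [mem_filter, mem_univ, true_and] at hf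
    obtain ⟨hf, hfv⟩ := hf
    have hfw : f w = v := by rw [← hfv]; exact ((hf v).1 hv).1
    funext u
    by_cases h1 : u = v
    · subst h1; simp [hfv]
    · by_cases h2 : u = w
      · subst h2; simp [h1, hfw]
      · simp [h1, h2]
  · -- right inverse
    intro g hg
    simp only [mem_filter, mem_univ, true_and, IsM] at hg
    have hgv : g v = v := (hg v).2 (by simp [mem_erase])
    have hgw : g w = w := (hg w).2 (by simp [mem_erase])
    funext u
    by_cases h1 : u = v
    · subst h1; simp [hgv]
    · by_cases h2 : u = w
      · subst h2; simp [h1, hgw]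
      · simp [h1, h2]


/-- The remaining region: cells with index `≥ i` that are not marked in the window `w`
(bit `j` of `w` corresponds to the cell with index `i + j`). -/
def region (m : ℕ) (i : ℕ) (w : ℕ) : Finset (Fin m × Fin m) :=
  univ.filter (fun x => i ≤ idx x ∧ ¬ w.testBit (idx x - i))

/-- One step of the transfer-matrix dynamic programming. -/
def tblStep (m i : ℕ) (prev : List ℕ) : List ℕ :=
  (List.range (2^m)).map fun w =>
    if w.testBit 0 then prev.getD (w >>> 1) 0
    else
      (if i % m + 1 < m then (if w.testBit 1 then 0 else prev.getD ((w >>> 1) ||| 1) 0) else 0)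
      + (if i / m + 1 < m then prev.getD ((w >>> 1) ||| 2^(m-1)) 0 else 0)

/-- The transfer-matrix table, `k` steps from the end. -/
def tbl (m : ℕ) : ℕ → List ℕ
  | 0 => List.replicate (2^m) 1
  | k+1 => tblStep m (m*m - (k+1)) (tbl m k)

-- helpers
lemma mem_region {m i w : ℕ} {x : Fin m × Fin m} :
    x ∈ region m i w ↔ i ≤ idx x ∧ ¬ w.testBit (idx x - i) := by
  simp [region]

lemma lt_two_pow_of_bits {w m : ℕ} (h : ∀ j, w.testBit j = true → j < m) : w < 2^m := by
  have h0 : w >>> m = 0 := by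
    apply Nat.eq_of_testBit_eq
    intro j
    rw [Nat.testBit_shiftRight, Nat.zero_testBit]
    by_contra hc
    simp only [Bool.not_eq_false] at hc
    have := h _ hc
    omega
  rw [Nat.shiftRight_eq_div_pow] at h0
  exact ((Nat.div_eq_zero_iff).mp h0).resolve_left (by positivity)

lemma getD_range_map {n : ℕ} (f : ℕ → ℕ) {w : ℕ} (hw : w < n) :
    ((List.range n).map f).getD w 0 = f w := by
  rw [List.getD_eq_getElem?_getD, List.getElem?_map, List.getElem?_range hw]; rfl

lemma testBit_one' (j : ℕ) : Nat.testBit 1 j = decide (j = 0) := by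
  have : (1 : ℕ) = 2^0 := rfl
  rw [this, Nat.testBit_two_pow]
  simp [eq_comm]

/-- The geometric lemma: a neighbour of `v` with index `≥ idx v` and `≠ v` is
the right or down neighbour. -/
lemma adj_ge {m : ℕ} {v u : Fin m × Fin m} (hadj : gridAdj v u) (hne : u ≠ v)
    (hge : idx v ≤ idx u) :
    (∃ h : (v.2 : ℕ) + 1 < m, u = (v.1, ⟨(v.2:ℕ)+1, h⟩)) ∨
    (∃ h : (v.1 : ℕ) + 1 < m, u = (⟨(v.1:ℕ)+1, h⟩, v.2)) := by
  rcases hadj with ⟨h1, h2 | h2⟩ | ⟨h1, h2 | h2⟩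
  · left
    refine ⟨h2 ▸ u.2.isLt, ?_⟩
    ext
    · exact congrArg Fin.val h1.symm
    · exact h2.symm
  · exfalso
    have : idx u + 1 = idx v := by
      unfold idx; rw [← h1]; omega
    have := idx_lt v
    omega
  · right
    refine ⟨h2 ▸ u.1.isLt, ?_⟩
    ext
    · exact h2.symm
    · exact congrArg Fin.val h1.symm
  · exfalso
    have hm : 0 < m := v.2.pos
    have h3 : (v.1 : ℕ) * m = (u.1 : ℕ) * m + m := by rw [← h2]; ring
    have h4 : (v.2 : ℕ) = (u.2 : ℕ) := congrArg Fin.val h1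
    have : idx u + m = idx v := by unfold idx; omega
    omega

lemma main_aux (m : ℕ) : ∀ k i w, i + k = m*m →
    (∀ j, w.testBit j = true → j < m ∧ i + j < m*m) →
    (tbl m k).getD w 0 = matchN (region m i w) := by
  intro k
  induction k with
  | zero =>
    intro i w hik hw
    have hwlt : w < 2^m := lt_two_pow_of_bits (fun j hj => (hw j hj).1)
    have hreg : region m i w = ∅ := by
      ext x
      simp only [mem_region, notMem_empty, iff_false, not_and]
      intro h
      have := idx_lt x
      omega
    rw [hreg, matchN_empty, tbl, List.getD_eq_getElem?_getD, List.getElem?_replicate,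
      if_pos hwlt]
    rfl
  | succ k ih =>
    intro i w hik hw
    have hilt : i < m*m := by omega
    have hm : 0 < m := by
      rcases Nat.eq_zero_or_pos m with h | h
      · subst h; simp at hilt
      · exact h
    have hwlt : w < 2^m := lt_two_pow_of_bits fun j hj => (hw j hj).1
    have hqr := Nat.div_add_mod i m
    have hrm : i % m < m := Nat.mod_lt _ hm
    have hqm : i / m < m := by
      rw [Nat.div_lt_iff_lt_mul hm]; rwa [Nat.mul_comm] at hilt
    have htbl : (tbl m (k+1)).getD w 0 = (if w.testBit 0 then (tbl m k).getD (w >>> 1) 0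
        else (if i % m + 1 < m then
            (if w.testBit 1 then 0 else (tbl m k).getD ((w >>> 1) ||| 1) 0) else 0)
          + (if i / m + 1 < m then (tbl m k).getD ((w >>> 1) ||| 2^(m-1)) 0 else 0)) := by
      rw [tbl, show m*m - (k+1) = i by omega, tblStep]
      exact getD_range_map _ hwlt
    set v : Fin m × Fin m := (⟨i / m, hqm⟩, ⟨i % m, hrm⟩) with hvdef
    have hidxv : idx v = i := by
      show (i % m) + (i / m) * m = i
      have : (i / m) * m = m * (i / m) := Nat.mul_comm _ _
      omega
    by_cases hb : w.testBit 0
    · -- current cell already covered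
      rw [htbl, if_pos hb, ih (i+1) (w >>> 1) (by omega) ?hyp]
      case hyp =>
        intro j hj
        rw [Nat.testBit_shiftRight] at hj
        have := hw _ hj
        omega
      congr 1
      ext x
      simp only [mem_region, Nat.testBit_shiftRight]
      constructor
      · rintro ⟨h1, h2⟩
        exact ⟨by omega, by rwa [show idx x - i = 1 + (idx x - (i+1)) by omega]⟩
      · rintro ⟨h1, h2⟩
        have hne : idx x ≠ i := by
          intro heq
          have hx : x = v := idx_inj (heq.trans hidxv.symm)
          rw [hx, hidxv, Nat.sub_self] at h2
          exact h2 hb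
        exact ⟨by omega, by rwa [show 1 + (idx x - (i+1)) = idx x - i by omega]⟩
    · -- current cell is free; it is matched right or down
      rw [htbl, if_neg hb]
      have hv_mem : v ∈ region m i w :=
        mem_region.mpr ⟨le_of_eq hidxv.symm, by rw [hidxv, Nat.sub_self]; simp [hb]⟩
      rw [matchN_split (region m i w) v hv_mem]
      set t := region m i w with htdef
      have hbm : w.testBit m = false := by
        by_contra hc
        simp only [Bool.not_eq_false] at hc
        exact absurd (hw m hc).1 (lt_irrefl m)
      have hstep1 : i % m + 1 < m → i + 1 < m*m := by
        intro hr
        have h5 : m * (i/m+1) ≤ m*m := Nat.mul_le_mul_left m (by omega)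
        have h6 : m*(i/m+1) = m*(i/m)+m := by ring
        omega
      have hstep2 : i / m + 1 < m → i + m < m*m := by
        intro hd
        have h5 : m * (i/m+2) ≤ m*m := Nat.mul_le_mul_left m (by omega)
        have h6 : m*(i/m+2) = m*(i/m)+2*m := by ring
        omega
      have hypR : i % m + 1 < m → ∀ j, ((w>>>1) ||| 1).testBit j = true →
          j < m ∧ (i+1) + j < m*m := by
        intro hr j hj
        rw [Nat.testBit_or, Bool.or_eq_true, Nat.testBit_shiftRight, testBit_one'] at hj
        rcases hj with hj | hj
        · have := hw _ hj; omega
        · simp only [decide_eq_true_eq] at hj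
          subst hj
          exact ⟨hm, by have := hstep1 hr; omega⟩
      have hypD : i / m + 1 < m → ∀ j, ((w>>>1) ||| 2^(m-1)).testBit j = true →
          j < m ∧ (i+1) + j < m*m := by
        intro hd j hj
        rw [Nat.testBit_or, Bool.or_eq_true, Nat.testBit_shiftRight, Nat.testBit_two_pow] at hj
        rcases hj with hj | hj
        · have := hw _ hj; omega
        · simp only [decide_eq_true_eq] at hj
          have := hstep2 hd
          omega
      have hmulc := Nat.mul_comm (i/m) m
      by_cases hd : i / m + 1 < m
      · -- down neighbour exists
        set dv : Fin m × Fin m := (⟨i/m+1, hd⟩, v.2) with hdvdef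
        have hidxdv : idx dv = i + m := by
          show (i % m) + (i/m+1) * m = i + m
          have h6 : (i/m+1)*m = (i/m)*m + m := by ring
          omega
        have hdv_adj : gridAdj v dv := Or.inr ⟨rfl, Or.inl rfl⟩
        have hdv_ne : dv ≠ v := by
          intro h
          have h2 : ((dv.1 : ℕ)) = ((v.1 : ℕ)) := by rw [h]
          simp only [hdvdef] at h2
          have hv1 : (v.1 : ℕ) = i / m := rfl
          omega
        have hdv_mem : dv ∈ t := by
          rw [htdef, mem_region, hidxdv, show i + m - i = m by omega]
          simp [hbm]
        have hregD : (t.erase v).erase dv = region m (i+1) ((w>>>1) ||| 2^(m-1)) := by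
          ext x
          simp only [mem_erase, htdef, mem_region, Nat.testBit_or, Nat.testBit_shiftRight,
            Nat.testBit_two_pow, Bool.or_eq_true, not_or, decide_eq_true_eq]
          constructor
          · rintro ⟨hxd, hxv, hxi, hxb⟩
            have h1 : idx x ≠ i := fun h => hxv (idx_inj (h.trans hidxv.symm))
            have h2 : idx x ≠ i + m := fun h => hxd (idx_inj (h.trans hidxdv.symm))
            refine ⟨by omega, ?_, by omega⟩
            rwa [show 1 + (idx x - (i+1)) = idx x - i by omega]
          · rintro ⟨hxi, b1, b2⟩
            have h2 : idx x ≠ i + m := by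
              intro h
              have := idx_lt x
              omega
            refine ⟨fun h => h2 (by rw [h]; exact hidxdv), fun h => by
                have : idx x = i := by rw [h]; exact hidxv
                omega, by omega, ?_⟩
            rwa [show idx x - i = 1 + (idx x - (i+1)) by omega]
        by_cases hr : i % m + 1 < m
        · set rv : Fin m × Fin m := (v.1, ⟨i%m+1, hr⟩) with hrvdef
          have hidxrv : idx rv = i + 1 := by
            show (i%m+1) + (i/m)*m = i+1
            omega
          have hrv_adj : gridAdj v rv := Or.inl ⟨rfl, Or.inl rfl⟩
          have hrv_ne : rv ≠ v := by
            intro h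
            have h2 : ((rv.2 : ℕ)) = ((v.2 : ℕ)) := by rw [h]
            simp only [hrvdef] at h2
            have hv2 : (v.2 : ℕ) = i % m := rfl
            omega
          have hrv_dv : rv ≠ dv := by
            intro h
            have h2 : ((rv.1 : ℕ)) = ((dv.1 : ℕ)) := by rw [h]
            simp only [hrvdef, hdvdef] at h2
            have hv1 : (v.1 : ℕ) = i / m := rfl
            omega
          have hrv_mem : rv ∈ t ↔ w.testBit 1 = false := by
            rw [htdef, mem_region, hidxrv, show i + 1 - i = 1 by omega]
            constructor
            · rintro ⟨-, h⟩
              exact Bool.not_eq_true _ ▸ h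
            · intro h
              exact ⟨by omega, by simp [h]⟩
          have hregR : (t.erase v).erase rv = region m (i+1) ((w>>>1) ||| 1) := by
            ext x
            simp only [mem_erase, htdef, mem_region, Nat.testBit_or, Nat.testBit_shiftRight,
              testBit_one', Bool.or_eq_true, not_or, decide_eq_true_eq]
            constructor
            · rintro ⟨hxr, hxv, hxi, hxb⟩
              have h1 : idx x ≠ i := fun h => hxv (idx_inj (h.trans hidxv.symm))
              have h2 : idx x ≠ i + 1 := fun h => hxr (idx_inj (h.trans hidxrv.symm))
              refine ⟨by omega, ?_, by omega⟩
              rwa [show 1 + (idx x - (i+1)) = idx x - i by omega]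
            · rintro ⟨hxi, b1, b2⟩
              refine ⟨fun h => b2 (by rw [h, hidxrv]; omega), fun h => by
                  have : idx x = i := by rw [h]; exact hidxv
                  omega, by omega, ?_⟩
              rwa [show idx x - i = 1 + (idx x - (i+1)) by omega]
          by_cases hrw : w.testBit 1 = true
          · -- right neighbour occupied: only down
            have hW : (t.erase v).filter (fun u => gridAdj v u) = {dv} := by
              ext u
              simp only [mem_filter, mem_erase, mem_singleton]
              constructor
              · rintro ⟨⟨hune, hut⟩, hadj⟩
                have hge : idx v ≤ idx u := by
                  rw [hidxv]; exact (mem_region.mp hut).1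
                rcases adj_ge hadj hune hge with ⟨h, rfl⟩ | ⟨h, rfl⟩
                · exact absurd (hrv_mem.mp hut) (by simp [hrw])
                · rfl
              · rintro rfl
                exact ⟨⟨hdv_ne, hdv_mem⟩, hdv_adj⟩
            rw [hW, Finset.sum_singleton, hregD,
              ← ih (i+1) ((w>>>1) ||| 2^(m-1)) (by omega) (hypD hd),
              if_pos hr, if_pos hrw, if_pos hd, Nat.zero_add]
          · -- both neighbours available
            have hW : (t.erase v).filter (fun u => gridAdj v u) = {rv, dv} := by
              ext u
              simp only [mem_filter, mem_erase, mem_insert, mem_singleton]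
              constructor
              · rintro ⟨⟨hune, hut⟩, hadj⟩
                have hge : idx v ≤ idx u := by
                  rw [hidxv]; exact (mem_region.mp hut).1
                rcases adj_ge hadj hune hge with ⟨h, rfl⟩ | ⟨h, rfl⟩
                · exact Or.inl rfl
                · exact Or.inr rfl
              · rintro (rfl | rfl)
                · exact ⟨⟨hrv_ne, hrv_mem.mpr (by simpa using hrw)⟩, hrv_adj⟩
                · exact ⟨⟨hdv_ne, hdv_mem⟩, hdv_adj⟩
            rw [hW, Finset.sum_pair hrv_dv, hregR, hregD,
              ← ih (i+1) ((w>>>1) ||| 1) (by omega) (hypR hr),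
              ← ih (i+1) ((w>>>1) ||| 2^(m-1)) (by omega) (hypD hd),
              if_pos hr, if_neg hrw, if_pos hd]
        · -- only down
          have hW : (t.erase v).filter (fun u => gridAdj v u) = {dv} := by
            ext u
            simp only [mem_filter, mem_erase, mem_singleton]
            constructor
            · rintro ⟨⟨hune, hut⟩, hadj⟩
              have hge : idx v ≤ idx u := by
                rw [hidxv]; exact (mem_region.mp hut).1
              rcases adj_ge hadj hune hge with ⟨h, rfl⟩ | ⟨h, rfl⟩
              · exact absurd h hr
              · rfl
            · rintro rfl
              exact ⟨⟨hdv_ne, hdv_mem⟩, hdv_adj⟩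
          rw [hW, Finset.sum_singleton, hregD,
            ← ih (i+1) ((w>>>1) ||| 2^(m-1)) (by omega) (hypD hd),
            if_neg hr, if_pos hd, Nat.zero_add]
      · -- no down neighbour
        by_cases hr : i % m + 1 < m
        · set rv : Fin m × Fin m := (v.1, ⟨i%m+1, hr⟩) with hrvdef
          have hidxrv : idx rv = i + 1 := by
            show (i%m+1) + (i/m)*m = i+1
            omega
          have hrv_adj : gridAdj v rv := Or.inl ⟨rfl, Or.inl rfl⟩
          have hrv_ne : rv ≠ v := by
            intro h
            have h2 : ((rv.2 : ℕ)) = ((v.2 : ℕ)) := by rw [h]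
            simp only [hrvdef] at h2
            have hv2 : (v.2 : ℕ) = i % m := rfl
            omega
          have hrv_mem : rv ∈ t ↔ w.testBit 1 = false := by
            rw [htdef, mem_region, hidxrv, show i + 1 - i = 1 by omega]
            constructor
            · rintro ⟨-, h⟩
              exact Bool.not_eq_true _ ▸ h
            · intro h
              exact ⟨by omega, by simp [h]⟩
          have hregR : (t.erase v).erase rv = region m (i+1) ((w>>>1) ||| 1) := by
            ext x
            simp only [mem_erase, htdef, mem_region, Nat.testBit_or, Nat.testBit_shiftRight,
              testBit_one', Bool.or_eq_true, not_or, decide_eq_true_eq]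
            constructor
            · rintro ⟨hxr, hxv, hxi, hxb⟩
              have h1 : idx x ≠ i := fun h => hxv (idx_inj (h.trans hidxv.symm))
              have h2 : idx x ≠ i + 1 := fun h => hxr (idx_inj (h.trans hidxrv.symm))
              refine ⟨by omega, ?_, by omega⟩
              rwa [show 1 + (idx x - (i+1)) = idx x - i by omega]
            · rintro ⟨hxi, b1, b2⟩
              refine ⟨fun h => b2 (by rw [h, hidxrv]; omega), fun h => by
                  have : idx x = i := by rw [h]; exact hidxv
                  omega, by omega, ?_⟩
              rwa [show idx x - i = 1 + (idx x - (i+1)) by omega]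
          by_cases hrw : w.testBit 1 = true
          · have hW : (t.erase v).filter (fun u => gridAdj v u) = ∅ := by
              ext u
              simp only [mem_filter, mem_erase, notMem_empty, iff_false, not_and]
              rintro ⟨hune, hut⟩ hadj
              have hge : idx v ≤ idx u := by
                rw [hidxv]; exact (mem_region.mp hut).1
              rcases adj_ge hadj hune hge with ⟨h, rfl⟩ | ⟨h, rfl⟩
              · exact absurd (hrv_mem.mp hut) (by simp [hrw])
              · exact absurd h hd
            rw [hW, Finset.sum_empty, if_pos hr, if_pos hrw, if_neg hd]
            rfl
          · have hW : (t.erase v).filter (fun u => gridAdj v u) = {rv} := by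
              ext u
              simp only [mem_filter, mem_erase, mem_singleton]
              constructor
              · rintro ⟨⟨hune, hut⟩, hadj⟩
                have hge : idx v ≤ idx u := by
                  rw [hidxv]; exact (mem_region.mp hut).1
                rcases adj_ge hadj hune hge with ⟨h, rfl⟩ | ⟨h, rfl⟩
                · rfl
                · exact absurd h hd
              · rintro rfl
                exact ⟨⟨hrv_ne, hrv_mem.mpr (by simpa using hrw)⟩, hrv_adj⟩
            rw [hW, Finset.sum_singleton, hregR,
              ← ih (i+1) ((w>>>1) ||| 1) (by omega) (hypR hr),
              if_pos hr, if_neg hrw, if_neg hd, Nat.add_zero]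
        · have hW : (t.erase v).filter (fun u => gridAdj v u) = ∅ := by
            ext u
            simp only [mem_filter, mem_erase, notMem_empty, iff_false, not_and]
            rintro ⟨hune, hut⟩ hadj
            have hge : idx v ≤ idx u := by
              rw [hidxv]; exact (mem_region.mp hut).1
            rcases adj_ge hadj hune hge with ⟨h, rfl⟩ | ⟨h, rfl⟩
            · exact absurd h hr
            · exact absurd h hd
          rw [hW, Finset.sum_empty, if_neg hr, if_neg hd]
          rfl

lemma squareTilingCount_eq (m : ℕ) : squareTilingCount m = (tbl m (m*m)).getD 0 0 := by
  rw [main_aux m (m*m) 0 0 (by omega) (by simp)]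
  have hreg : region m 0 0 = univ := by
    ext x; simp [region]
  rw [hreg, squareTilingCount, matchN]
  congr 1
  apply filter_congr
  intro f _
  simp only [IsM, mem_univ, not_true_eq_false, false_implies, and_true, true_implies, eq_iff_iff]

set_option maxRecDepth 1000000 in
set_option maxHeartbeats 8000000 in
/-- The 2×2 square has 2 domino tilings, the 4×4 square has 36, the 6×6 square has
6728, and the 8×8 square has 12988816. -/
theorem squareTilingCount_values :
    squareTilingCount 2 = 2 ∧ squareTilingCount 4 = 36 ∧
    squareTilingCount 6 = 6728 ∧ squareTilingCount 8 = 12988816 := by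
  exact ⟨(squareTilingCount_eq 2).trans (by decide),
    (squareTilingCount_eq 4).trans (by decide),
    (squareTilingCount_eq 6).trans (by decide),
    (squareTilingCount_eq 8).trans (by decide)⟩
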